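/- Let M be a compact Riemann surface with Kähler form ω, and suppose ω' = ρ ω with ρ : M → ℝ smooth, 0 ≤ ρ, and ρ vanishing only at finitely many points q₁,…,q_k with positive multiplicities n₁,…,n_k, each local model ρ = |z|^{2n_j}·(positive smooth). If i F_{ω'} + e²τ ω' = i F_ω + e²τ ω holds on M \ {q_j} with e², τ > 0, then Vol(M, ω') = Vol(M, ω) − (2π/(e²τ)) Σ_j n_j. In particular 2π Σ_j n_j < e²τ · Vol(M, ω). -/

import Mathlib

open MeasureTheory

/-- Volume reduction for degenerate solutions of the curvature equation on a compact
surface.  Here μ is the volume measure of (M, ω); K and K' are the curvature densities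
i F_ω/ω and (the smooth extension of) i F_{ω'}/ω; Gauss–Bonnet gives ∫K = 2π(2-2g) and
∫K' = 2π(2-2g+Σnⱼ); ω' = ρ ω degenerates at the points qⱼ with multiplicities nⱼ.
Then Vol(M,ω') = Vol(M,ω) - (2π/(e²τ)) Σnⱼ, and in particular
2π Σnⱼ < e²τ Vol(M,ω). -/
theorem stmt7 {M : Type*} [MeasurableSpace M] (μ : Measure M) [IsFiniteMeasure μ]
    (hμU : 0 < (μ Set.univ).toReal)
    (k : ℕ) (q : Fin k → M) (n : Fin k → ℕ) (hn : ∀ j, 0 < n j) (g : ℕ)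
    (e2 τ : ℝ) (he : 0 < e2) (hτ : 0 < τ)
    (ρ K K' : M → ℝ)
    (hρ0 : ∀ x, 0 ≤ ρ x)
    (hρpos : ∀ x, x ∉ Set.range q → 0 < ρ x)
    (hμq : μ (Set.range q) = 0)
    (hK : Integrable K μ) (hK' : Integrable K' μ) (hρint : Integrable ρ μ)
    (hGB : ∫ x, K x ∂μ = 2 * Real.pi * (2 - 2 * (g : ℝ)))
    (hGB' : ∫ x, K' x ∂μ = 2 * Real.pi * ((2 - 2 * (g : ℝ)) + ∑ j, (n j : ℝ)))
    (heq : ∀ x, x ∉ Set.range q → K' x + e2 * τ * ρ x = K x + e2 * τ) :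
    (∫ x, ρ x ∂μ)
        = (μ Set.univ).toReal - (2 * Real.pi / (e2 * τ)) * ∑ j, (n j : ℝ) ∧
    2 * Real.pi * ∑ j, (n j : ℝ) < e2 * τ * (μ Set.univ).toReal := by
  have heτ : 0 < e2 * τ := mul_pos he hτ
  -- a.e. equality
  have hae : (fun x => K' x + e2 * τ * ρ x) =ᵐ[μ] fun x => K x + e2 * τ := by
    refine (measure_mono_null ?_ hμq : μ {x | ¬ _} = 0)
    intro x hx
    simp only [Set.mem_setOf_eq] at hx
    by_contra hxr
    exact hx (heq x hxr)
  have hint : ∫ x, (K' x + e2 * τ * ρ x) ∂μ = ∫ x, (K x + e2 * τ) ∂μ :=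
    integral_congr_ae hae
  rw [integral_add hK' (hρint.const_mul _), integral_add hK (integrable_const _),
    MeasureTheory.integral_const_mul, integral_const, smul_eq_mul, hGB, hGB'] at hint
  have key : ∫ x, ρ x ∂μ
      = (μ Set.univ).toReal - (2 * Real.pi / (e2 * τ)) * ∑ j, (n j : ℝ) := by
    field_simp at hint ⊢
    rw [measureReal_def] at hint
    linarith
  refine ⟨key, ?_⟩
  -- positivity of ∫ ρ
  have hpos : 0 < ∫ x, ρ x ∂μ := by
    rw [integral_pos_iff_support_of_nonneg (fun x => hρ0 x) hρint]
    have hsub : Set.univ \ Set.range q ⊆ Function.support ρ := fun x hx =>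
      (hρpos x hx.2).ne'
    calc 0 < μ Set.univ := by
              rcases (ENNReal.toReal_pos_iff.mp hμU) with ⟨h1, _⟩; exact h1
      _ = μ (Set.univ \ Set.range q) := (measure_diff_null hμq).symm
      _ ≤ μ (Function.support ρ) := measure_mono hsub
  rw [key] at hpos
  have h2 : (2 * Real.pi / (e2 * τ)) * ∑ j, (n j : ℝ) < (μ Set.univ).toReal := by
    linarith
  calc 2 * Real.pi * ∑ j, (n j : ℝ)
      = e2 * τ * ((2 * Real.pi / (e2 * τ)) * ∑ j, (n j : ℝ)) := by field_simp
    _ < e2 * τ * (μ Set.univ).toReal := by exact (mul_lt_mul_iff_right₀ heτ).mpr h2
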